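/- arXiv:2410.01910 — 3 statements merged into one kernel-verified Lean document; each statement's English description precedes it below -/
import Mathlib

section
/- Let f : ℝ → ℝ be a Pfaffian function. If f is not constant, then its zero set {x ∈ ℝ : f(x) = 0} is finite. -/
/-- A Pfaffian chain on ℝ: a finite sequence of real-analytic functions
`f 0, …, f (r-1) : ℝ → ℝ` such that for each `i` there is a real polynomial `P i`
in `1 + (i+1)` variables with `(f i)′ x = P i (x, f 0 x, …, f i x)` for all `x`. -/
def IsPfaffianChain {r : ℕ} (f : Fin r → ℝ → ℝ) : Prop :=
  (∀ i : Fin r, ∀ x : ℝ, AnalyticAt ℝ (f i) x) ∧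
  ∀ i : Fin r, ∃ P : MvPolynomial (Fin (i.val + 2)) ℝ,
    ∀ x : ℝ,
      deriv (f i) x =
        MvPolynomial.eval
          (Fin.cons x (fun j : Fin (i.val + 1) => f (Fin.castLE i.isLt j) x)) P

/-- A function `g : ℝ → ℝ` is Pfaffian if there is a Pfaffian chain `f 0, …, f (r-1)`
and a real polynomial `Q` in `1 + r` variables such that
`g x = Q (x, f 0 x, …, f (r-1) x)` for all `x`. -/
def IsPfaffian (g : ℝ → ℝ) : Prop :=
  ∃ (r : ℕ) (f : Fin r → ℝ → ℝ), IsPfaffianChain f ∧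
    ∃ Q : MvPolynomial (Fin (r + 1)) ℝ,
      ∀ x : ℝ, g x = MvPolynomial.eval (Fin.cons x (fun j : Fin r => f j x)) Q


open Polynomial Set Filter Topology

namespace PfaffAux

/-- A "Khovanskii set": a set of functions closed under ring operations and
differentiation, consisting of analytic functions, each of which is zero or has
finitely many zeros. -/
structure KhovSet (S : Set (ℝ → ℝ)) : Prop where
  anal : ∀ g ∈ S, ∀ x : ℝ, AnalyticAt ℝ g x
  cst : ∀ c : ℝ, (fun _ : ℝ => c) ∈ S
  add : ∀ g ∈ S, ∀ h ∈ S, g + h ∈ S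
  mul : ∀ g ∈ S, ∀ h ∈ S, g * h ∈ S
  dmem : ∀ g ∈ S, deriv g ∈ S
  fin : ∀ g ∈ S, g ≠ 0 → {x : ℝ | g x = 0}.Finite

section closure

variable {S : Set (ℝ → ℝ)}
variable (hc : ∀ c : ℝ, (fun _ : ℝ => c) ∈ S)
variable (ha : ∀ g ∈ S, ∀ h ∈ S, g + h ∈ S)
variable (hm : ∀ g ∈ S, ∀ h ∈ S, g * h ∈ S)

include hc in
lemma zero_mem : (0 : ℝ → ℝ) ∈ S := hc 0

include hc in
lemma one_mem : (1 : ℝ → ℝ) ∈ S := hc 1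

include hc hm in
lemma neg_mem {g : ℝ → ℝ} (hg : g ∈ S) : -g ∈ S := by
  have : -g = (fun _ : ℝ => (-1 : ℝ)) * g := by funext x; simp
  rw [this]; exact hm _ (hc (-1)) _ hg

include hc ha hm in
lemma sub_mem {g h : ℝ → ℝ} (hg : g ∈ S) (hh : h ∈ S) : g - h ∈ S := by
  have : g - h = g + -h := sub_eq_add_neg g h
  rw [this]; exact ha _ hg _ (neg_mem hc hm hh)

include hc ha in
lemma sum_mem {ι : Type*} (F : Finset ι) (v : ι → ℝ → ℝ) (hv : ∀ i ∈ F, v i ∈ S) :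
    (∑ i ∈ F, v i) ∈ S :=
  Finset.sum_induction v (· ∈ S) (fun a b h1 h2 => ha a h1 b h2) (zero_mem hc) hv

/-- All coefficients of a polynomial lie in `S`. -/
def Pmem (S : Set (ℝ → ℝ)) (p : (ℝ → ℝ)[X]) : Prop := ∀ i, p.coeff i ∈ S

include hc in
lemma Pmem_C {g : ℝ → ℝ} (hg : g ∈ S) : Pmem S (C g) := by
  intro i
  rw [coeff_C]
  split <;> [exact hg; exact zero_mem hc]

include hc in
lemma Pmem_zero : Pmem S 0 := by
  intro i; simpa using zero_mem hc

include hc in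
lemma Pmem_X : Pmem S (X : (ℝ → ℝ)[X]) := by
  intro i
  rw [coeff_X]
  split <;> [exact one_mem hc; exact zero_mem hc]

include ha in
lemma Pmem_add {p q : (ℝ → ℝ)[X]} (hp : Pmem S p) (hq : Pmem S q) : Pmem S (p + q) := by
  intro i; rw [coeff_add]; exact ha _ (hp i) _ (hq i)

include hc ha hm in
lemma Pmem_mul {p q : (ℝ → ℝ)[X]} (hp : Pmem S p) (hq : Pmem S q) : Pmem S (p * q) := by
  intro i
  rw [coeff_mul]
  exact sum_mem hc ha _ _ fun z _ => hm _ (hp z.1) _ (hq z.2)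

include hc ha hm in
lemma Pmem_sub {p q : (ℝ → ℝ)[X]} (hp : Pmem S p) (hq : Pmem S q) : Pmem S (p - q) := by
  intro i; rw [coeff_sub]; exact sub_mem hc ha hm (hp i) (hq i)

include hc ha hm in
lemma Pmem_pow {p : (ℝ → ℝ)[X]} (hp : Pmem S p) (n : ℕ) : Pmem S (p ^ n) := by
  induction n with
  | zero => simpa [pow_zero] using Pmem_C hc (one_mem hc)
  | succ n ih => rw [pow_succ]; exact Pmem_mul hc ha hm ih hp

include hm in
lemma Pmem_derivative {p : (ℝ → ℝ)[X]} (hp : Pmem S p) (hcst : ∀ c : ℝ, (fun _ : ℝ => c) ∈ S) :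
    Pmem S (derivative p) := by
  intro i
  rw [coeff_derivative]
  have : ((i : ℝ → ℝ) + 1) ∈ S := by
    have : ((i : ℝ → ℝ) + 1) = fun _ : ℝ => ((i : ℝ) + 1) := by
      funext x; simp
    rw [this]; exact hcst _
  exact hm _ (hp (i + 1)) _ this

include hc ha hm in
lemma mv_mem {k : ℕ} (G : Fin k → ℝ → ℝ) (hG : ∀ i, G i ∈ S)
    (Q : MvPolynomial (Fin k) ℝ) :
    (fun x => MvPolynomial.eval (fun i => G i x) Q) ∈ S := by
  induction Q using MvPolynomial.induction_on with
  | C a => simpa [MvPolynomial.eval_C] using hc a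
  | add p q hp hq =>
      simp only [MvPolynomial.eval_add]
      exact ha _ hp _ hq
  | mul_X p i hp =>
      simp only [MvPolynomial.eval_mul, MvPolynomial.eval_X]
      exact hm _ hp _ (hG i)

end closure

/-- Extension of a set of functions by a new function `φ`: polynomials in `φ`
with coefficients in `S`. -/
def ExtSet (S : Set (ℝ → ℝ)) (φ : ℝ → ℝ) : Set (ℝ → ℝ) :=
  {g | ∃ p : (ℝ → ℝ)[X], Pmem S p ∧ g = p.eval φ}

section ext

variable {S : Set (ℝ → ℝ)} {φ : ℝ → ℝ}
variable (hc : ∀ c : ℝ, (fun _ : ℝ => c) ∈ S)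
variable (ha : ∀ g ∈ S, ∀ h ∈ S, g + h ∈ S)
variable (hm : ∀ g ∈ S, ∀ h ∈ S, g * h ∈ S)

include hc in
lemma subset_ext : S ⊆ ExtSet S φ := by
  intro g hg
  exact ⟨C g, Pmem_C hc hg, by simp⟩

include hc in
lemma self_mem_ext : φ ∈ ExtSet S φ :=
  ⟨X, Pmem_X hc, by simp⟩

include hc in
lemma ext_cst : ∀ c : ℝ, (fun _ : ℝ => c) ∈ ExtSet S φ := fun c => subset_ext hc (hc c)

include ha in
lemma ext_add : ∀ g ∈ ExtSet S φ, ∀ h ∈ ExtSet S φ, g + h ∈ ExtSet S φ := by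
  rintro g ⟨p, hp, rfl⟩ h ⟨q, hq, rfl⟩
  exact ⟨p + q, Pmem_add ha hp hq, by simp⟩

include hc ha hm in
lemma ext_mul : ∀ g ∈ ExtSet S φ, ∀ h ∈ ExtSet S φ, g * h ∈ ExtSet S φ := by
  rintro g ⟨p, hp, rfl⟩ h ⟨q, hq, rfl⟩
  exact ⟨p * q, Pmem_mul hc ha hm hp hq, by simp⟩

end ext

lemma eval_apply (p : (ℝ → ℝ)[X]) (φ : ℝ → ℝ) (x : ℝ) :
    p.eval φ x = ∑ i ∈ Finset.range (p.natDegree + 1), p.coeff i x * φ x ^ i := by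
  rw [Polynomial.eval_eq_sum_range]
  rw [Finset.sum_apply]
  simp [Pi.pow_apply]

lemma anal_eval {p : (ℝ → ℝ)[X]} {φ : ℝ → ℝ}
    (hp : ∀ i, ∀ x : ℝ, AnalyticAt ℝ (p.coeff i) x)
    (hφ : ∀ x : ℝ, AnalyticAt ℝ φ x) (x : ℝ) :
    AnalyticAt ℝ (p.eval φ) x := by
  have hrepr : p.eval φ =
      fun y => ∑ i ∈ Finset.range (p.natDegree + 1), p.coeff i y * φ y ^ i :=
    funext fun y => eval_apply p φ y
  rw [hrepr]
  exact Finset.analyticAt_fun_sum _ fun i _ => (hp i x).mul ((hφ x).pow i)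

/-- The polynomial obtained by differentiating each coefficient. -/
noncomputable def pderivCoeff (p : (ℝ → ℝ)[X]) : (ℝ → ℝ)[X] :=
  ∑ i ∈ Finset.range (p.natDegree + 1), C (deriv (p.coeff i)) * X ^ i

lemma coeff_pderivCoeff (p : (ℝ → ℝ)[X]) (j : ℕ) :
    (pderivCoeff p).coeff j =
      if j ∈ Finset.range (p.natDegree + 1) then deriv (p.coeff j) else 0 := by
  rw [pderivCoeff, finset_sum_coeff]
  simp only [coeff_C_mul, coeff_X_pow, mul_ite, mul_one, mul_zero]
  rw [Finset.sum_ite_eq (Finset.range (p.natDegree + 1)) j (fun i => deriv (p.coeff i))]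

lemma deriv_eval_poly (p : (ℝ → ℝ)[X]) (φ : ℝ → ℝ)
    (hp : ∀ i, ∀ x : ℝ, AnalyticAt ℝ (p.coeff i) x)
    (hφ : ∀ x : ℝ, AnalyticAt ℝ φ x) :
    deriv (p.eval φ) = (pderivCoeff p).eval φ + (derivative p).eval φ * deriv φ := by
  funext x
  set N := p.natDegree + 1 with hN
  have hrepr : p.eval φ = fun y => ∑ i ∈ Finset.range N, p.coeff i y * φ y ^ i :=
    funext fun y => eval_apply p φ y
  have hder : HasDerivAt (p.eval φ)
      (∑ i ∈ Finset.range N,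
        (deriv (p.coeff i) x * φ x ^ i +
          p.coeff i x * ((i : ℝ) * φ x ^ (i - 1) * deriv φ x))) x := by
    rw [hrepr]
    apply HasDerivAt.fun_sum
    intro i _
    exact ((hp i x).differentiableAt.hasDerivAt).mul
      (((hφ x).differentiableAt.hasDerivAt).pow i)
  rw [hder.deriv]
  have h1 : (pderivCoeff p).eval φ x = ∑ i ∈ Finset.range N, deriv (p.coeff i) x * φ x ^ i := by
    rw [pderivCoeff, eval_finset_sum, Finset.sum_apply]
    simp [Pi.pow_apply]
    rfl
  have h2 : (derivative p).eval φ x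
      = ∑ i ∈ Finset.range N, p.coeff i x * ((i : ℝ) * φ x ^ (i - 1)) := by
    conv_lhs => rw [p.as_sum_range' N (by omega)]
    rw [derivative_sum, eval_finset_sum, Finset.sum_apply]
    congr 1
    funext i
    rw [derivative_monomial, eval_monomial]
    simp [Pi.pow_apply]
    ring
  rw [Pi.add_apply, Pi.mul_apply, h1, h2, Finset.sum_add_distrib, Finset.sum_mul]
  congr 1
  apply Finset.sum_congr rfl
  intro i _
  ring

section pdiv

variable {S : Set (ℝ → ℝ)}
variable (hc : ∀ c : ℝ, (fun _ : ℝ => c) ∈ S)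
variable (ha : ∀ g ∈ S, ∀ h ∈ S, g + h ∈ S)
variable (hm : ∀ g ∈ S, ∀ h ∈ S, g * h ∈ S)

include hc ha hm in
/-- Pseudo-division with coefficient tracking. -/
lemma pdiv (q : (ℝ → ℝ)[X]) (hq : Pmem S q) (hqdeg : 0 < q.degree) :
    ∀ (n : ℕ) (p : (ℝ → ℝ)[X]), p.natDegree ≤ n → Pmem S p →
      ∃ (k : ℕ) (A B : (ℝ → ℝ)[X]), Pmem S A ∧ Pmem S B ∧ B.degree < q.degree ∧
        C q.leadingCoeff ^ k * p = A * q + B := by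
  intro n
  induction n with
  | zero =>
      intro p hn hp
      refine ⟨0, 0, p, Pmem_zero hc, hp, ?_, by simp⟩
      have h1 : p.degree ≤ 0 := by
        refine le_trans degree_le_natDegree ?_
        exact_mod_cast Nat.cast_le.mpr hn
      exact lt_of_le_of_lt h1 hqdeg
  | succ n ih =>
      intro p hn hp
      by_cases hlt : p.degree < q.degree
      · exact ⟨0, 0, p, Pmem_zero hc, hp, hlt, by simp⟩
      · have hple : q.degree ≤ p.degree := not_lt.1 hlt
        have hp0 : p ≠ 0 := by
          rintro rfl
          exact hlt (lt_of_le_of_lt bot_le hqdeg : (0:(ℝ→ℝ)[X]).degree < q.degree)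
        have hq0 : q ≠ 0 := by
          rintro rfl
          simp at hqdeg
        have hqn : q.natDegree ≤ p.natDegree := natDegree_le_natDegree hple
        set e := p.natDegree - q.natDegree with he
        set p₁ := C q.leadingCoeff * p - C p.leadingCoeff * (X ^ e * q) with hp₁
        have hp₁deg : p₁.degree < p.degree := by
          rw [degree_eq_natDegree hp0]
          rw [degree_lt_iff_coeff_zero]
          intro m hm'
          have hm2 : p.natDegree ≤ m := by exact_mod_cast hm'
          have hem : e ≤ m := le_trans (Nat.sub_le _ _) hm2
          have hxq : (X ^ e * q).coeff m = q.coeff (m - e) := by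
            conv_lhs => rw [show m = (m - e) + e by omega]
            exact coeff_X_pow_mul q e (m - e)
          rcases eq_or_lt_of_le hm2 with hEq | hLt
          · subst hEq
            rw [hp₁, coeff_sub, coeff_C_mul, coeff_C_mul, hxq]
            rw [coeff_natDegree, show p.natDegree - e = q.natDegree by omega, coeff_natDegree]
            ring
          · rw [hp₁, coeff_sub, coeff_C_mul, coeff_C_mul, hxq]
            rw [coeff_eq_zero_of_natDegree_lt hLt]
            rw [coeff_eq_zero_of_natDegree_lt (show q.natDegree < m - e by omega)]
            ring
        have hp₁n : p₁.natDegree ≤ n := by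
          by_cases h0 : p₁ = 0
          · simp [h0]
          · have := natDegree_lt_natDegree h0 hp₁deg
            omega
        have hp₁m : Pmem S p₁ := by
          refine Pmem_sub hc ha hm ?_ ?_
          · exact Pmem_mul hc ha hm (Pmem_C hc (hq _)) hp
          · exact Pmem_mul hc ha hm (Pmem_C hc (hp _))
              (Pmem_mul hc ha hm (Pmem_pow hc ha hm (Pmem_X hc) e) hq)
        obtain ⟨k, A, B, hA, hB, hBdeg, heq⟩ := ih p₁ hp₁n hp₁m
        refine ⟨k + 1, A + C q.leadingCoeff ^ k * (C p.leadingCoeff * X ^ e), B,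
          ?_, hB, hBdeg, ?_⟩
        · refine Pmem_add ha hA ?_
          exact Pmem_mul hc ha hm (Pmem_pow hc ha hm (Pmem_C hc (hq _)) k)
            (Pmem_mul hc ha hm (Pmem_C hc (hp _)) (Pmem_pow hc ha hm (Pmem_X hc) e))
        · have : C q.leadingCoeff ^ k * p₁ = A * q + B := heq
          rw [hp₁] at this
          linear_combination this

end pdiv

section analysis

lemma finite_zeros_Icc {g : ℝ → ℝ} (hganal : ∀ x, AnalyticAt ℝ g x) (hne : g ≠ 0)
    (u v : ℝ) : {x | x ∈ Icc u v ∧ g x = 0}.Finite := by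
  by_contra hinf
  have hinf2 : Set.Infinite {x | x ∈ Icc u v ∧ g x = 0} := hinf
  obtain ⟨z, hzK, hz⟩ := hinf2.exists_accPt_of_subset_isCompact isCompact_Icc
    (fun x hx => hx.1)
  rw [accPt_iff_frequently] at hz
  have hfreq : ∃ᶠ y in 𝓝[≠] z, g y = 0 := by
    rw [frequently_nhdsWithin_iff]
    exact hz.mono (fun y hy => ⟨hy.2.2, hy.1⟩)
  have h0 : ∀ᶠ y in 𝓝 z, g y = 0 := (hganal z).frequently_zero_iff_eventually_zero.mp hfreq
  have : g = 0 := by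
    funext x
    exact AnalyticOnNhd.eqOn_zero_of_preconnected_of_eventuallyEq_zero
      (fun y _ => hganal y) isPreconnected_univ (mem_univ z)
      (h0.mono fun y hy => by simpa using hy) (mem_univ x)
  exact hne this

lemma deriv_nonneg_right {g : ℝ → ℝ} {u v : ℝ} (huv : u < v)
    (hdiff : DifferentiableAt ℝ g u) (h0 : g u = 0)
    (hpos : ∀ x ∈ Ioo u v, 0 < g x) : 0 ≤ deriv g u := by
  have ht : Tendsto (slope g u) (𝓝[>] u) (𝓝 (deriv g u)) :=
    (hasDerivAt_iff_tendsto_slope.mp hdiff.hasDerivAt).mono_left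
      (nhdsWithin_mono u (fun x hx => by simpa using ne_of_gt hx))
  refine ge_of_tendsto ht ?_
  filter_upwards [Ioo_mem_nhdsGT_of_mem ⟨le_refl u, huv⟩] with x hx
  rw [slope_def_field, h0, sub_zero]
  exact div_nonneg (hpos x hx).le (by linarith [hx.1] : (0:ℝ) ≤ x - u)

lemma deriv_nonpos_left {g : ℝ → ℝ} {u v : ℝ} (huv : u < v)
    (hdiff : DifferentiableAt ℝ g v) (h0 : g v = 0)
    (hpos : ∀ x ∈ Ioo u v, 0 < g x) : deriv g v ≤ 0 := by
  have ht : Tendsto (slope g v) (𝓝[<] v) (𝓝 (deriv g v)) :=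
    (hasDerivAt_iff_tendsto_slope.mp hdiff.hasDerivAt).mono_left
      (nhdsWithin_mono v (fun x hx => by simpa using ne_of_lt hx))
  refine le_of_tendsto ht ?_
  filter_upwards [Ioo_mem_nhdsLT_of_mem ⟨huv, le_refl v⟩] with x hx
  rw [slope_def_field, h0, sub_zero]
  exact div_nonpos_of_nonneg_of_nonpos (hpos x hx).le (by linarith [hx.2] : x - v ≤ 0)

lemma deriv_nonpos_right {g : ℝ → ℝ} {u v : ℝ} (huv : u < v)
    (hdiff : DifferentiableAt ℝ g u) (h0 : g u = 0)
    (hneg : ∀ x ∈ Ioo u v, g x < 0) : deriv g u ≤ 0 := by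
  have ht : Tendsto (slope g u) (𝓝[>] u) (𝓝 (deriv g u)) :=
    (hasDerivAt_iff_tendsto_slope.mp hdiff.hasDerivAt).mono_left
      (nhdsWithin_mono u (fun x hx => by simpa using ne_of_gt hx))
  refine le_of_tendsto ht ?_
  filter_upwards [Ioo_mem_nhdsGT_of_mem ⟨le_refl u, huv⟩] with x hx
  rw [slope_def_field, h0, sub_zero]
  exact div_nonpos_of_nonpos_of_nonneg (hneg x hx).le (by linarith [hx.1] : (0:ℝ) ≤ x - u)

lemma deriv_nonneg_left {g : ℝ → ℝ} {u v : ℝ} (huv : u < v)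
    (hdiff : DifferentiableAt ℝ g v) (h0 : g v = 0)
    (hneg : ∀ x ∈ Ioo u v, g x < 0) : 0 ≤ deriv g v := by
  have ht : Tendsto (slope g v) (𝓝[<] v) (𝓝 (deriv g v)) :=
    (hasDerivAt_iff_tendsto_slope.mp hdiff.hasDerivAt).mono_left
      (nhdsWithin_mono v (fun x hx => by simpa using ne_of_lt hx))
  refine ge_of_tendsto ht ?_
  filter_upwards [Ioo_mem_nhdsLT_of_mem ⟨huv, le_refl v⟩] with x hx
  rw [slope_def_field, h0, sub_zero]
  exact div_nonneg_of_nonpos (hneg x hx).le (by linarith [hx.2] : x - v ≤ 0)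


lemma exists_zero_between {g h e : ℝ → ℝ} (hganal : ∀ x, AnalyticAt ℝ g x) (hgne : g ≠ 0)
    (hh : Continuous h) (he : ∀ x, 0 ≤ e x)
    (hrel : ∀ x, g x = 0 → h x = e x * deriv g x)
    {u v : ℝ} (huv : u < v) (hu : g u = 0) (hv : g v = 0) :
    ∃ c ∈ Icc u v, h c = 0 := by
  have hfin := finite_zeros_Icc hganal hgne u v
  set Z := hfin.toFinset.filter (fun x => x < v) with hZ
  have huZ : u ∈ Z := by
    rw [hZ, Finset.mem_filter, Set.Finite.mem_toFinset]
    exact ⟨⟨⟨le_refl u, huv.le⟩, hu⟩, huv⟩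
  have hZne : Z.Nonempty := ⟨u, huZ⟩
  set u' := Z.max' hZne with hu'
  have hu'mem : u' ∈ Z := Z.max'_mem hZne
  rw [hZ, Finset.mem_filter, Set.Finite.mem_toFinset] at hu'mem
  obtain ⟨⟨hu'Icc, hgu'⟩, hu'v⟩ := hu'mem
  have hmax : ∀ x ∈ Ioo u' v, g x ≠ 0 := by
    intro x hx hgx
    have hxZ : x ∈ Z := by
      rw [hZ, Finset.mem_filter, Set.Finite.mem_toFinset]
      exact ⟨⟨⟨le_trans hu'Icc.1 hx.1.le, hx.2.le⟩, hgx⟩, hx.2⟩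
    exact absurd (Z.le_max' x hxZ) (not_le.mpr hx.1)
  have hdiff : ∀ x, DifferentiableAt ℝ g x := fun x => (hganal x).differentiableAt
  have hgc : Continuous g := by
    rw [continuous_iff_continuousAt]; exact fun x => (hdiff x).continuousAt
  have hw : (u' + v)/2 ∈ Ioo u' v := ⟨by linarith, by linarith⟩
  have hsign : (∀ x ∈ Ioo u' v, 0 < g x) ∨ (∀ x ∈ Ioo u' v, g x < 0) := by
    rcases lt_or_gt_of_ne (hmax _ hw) with hneg | hpos
    · right
      intro x hx
      by_contra hle
      have hxpos : 0 < g x := lt_of_le_of_ne (not_lt.mp hle) (Ne.symm (hmax x hx))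
      have hsub : uIcc x ((u' + v)/2) ⊆ Ioo u' v := (ordConnected_Ioo).uIcc_subset hx hw
      have h0mem : (0:ℝ) ∈ uIcc (g x) (g ((u' + v)/2)) := by
        rw [Set.mem_uIcc]; right; exact ⟨hneg.le, hxpos.le⟩
      obtain ⟨y, hy, hy0⟩ := intermediate_value_uIcc (hgc.continuousOn) h0mem
      exact hmax y (hsub hy) hy0
    · left
      intro x hx
      by_contra hle
      have hxneg : g x < 0 := lt_of_le_of_ne (not_lt.mp hle) (hmax x hx)
      have hsub : uIcc x ((u' + v)/2) ⊆ Ioo u' v := (ordConnected_Ioo).uIcc_subset hx hw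
      have h0mem : (0:ℝ) ∈ uIcc (g x) (g ((u' + v)/2)) := by
        rw [Set.mem_uIcc]; left; exact ⟨hxneg.le, hpos.le⟩
      obtain ⟨y, hy, hy0⟩ := intermediate_value_uIcc (hgc.continuousOn) h0mem
      exact hmax y (hsub hy) hy0
  rcases hsign with hpos | hneg
  · have h1 : 0 ≤ deriv g u' := deriv_nonneg_right hu'v (hdiff u') hgu' hpos
    have h2 : deriv g v ≤ 0 := deriv_nonpos_left hu'v (hdiff v) hv hpos
    have hhu' : 0 ≤ h u' := by rw [hrel u' hgu']; exact mul_nonneg (he u') h1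
    have hhv : h v ≤ 0 := by
      rw [hrel v hv]; exact mul_nonpos_of_nonneg_of_nonpos (he v) h2
    obtain ⟨c, hc, hc0⟩ := intermediate_value_Icc' hu'v.le hh.continuousOn
      (show (0:ℝ) ∈ Icc (h v) (h u') from ⟨hhv, hhu'⟩)
    exact ⟨c, ⟨le_trans hu'Icc.1 hc.1, hc.2⟩, hc0⟩
  · have h1 : deriv g u' ≤ 0 := deriv_nonpos_right hu'v (hdiff u') hgu' hneg
    have h2 : 0 ≤ deriv g v := deriv_nonneg_left hu'v (hdiff v) hv hneg
    have hhu' : h u' ≤ 0 := by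
      rw [hrel u' hgu']; exact mul_nonpos_of_nonneg_of_nonpos (he u') h1
    have hhv : 0 ≤ h v := by rw [hrel v hv]; exact mul_nonneg (he v) h2
    obtain ⟨c, hc, hc0⟩ := intermediate_value_Icc hu'v.le hh.continuousOn
      (show (0:ℝ) ∈ Icc (h u') (h v) from ⟨hhu', hhv⟩)
    exact ⟨c, ⟨le_trans hu'Icc.1 hc.1, hc.2⟩, hc0⟩

lemma infinite_transfer {g h : ℝ → ℝ} (hg : {x : ℝ | g x = 0}.Infinite)
    (hb : ∀ u v : ℝ, g u = 0 → g v = 0 → u < v → ∃ c ∈ Icc u v, h c = 0) :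
    {x : ℝ | h x = 0}.Infinite := by
  by_contra hfin
  rw [Set.not_infinite] at hfin
  set n := hfin.toFinset.card with hn
  obtain ⟨t, hts, htfin, htcard⟩ := hg.exists_subset_ncard_eq (2*n+2)
  have hTcard : htfin.toFinset.card = 2*n+2 := by
    rw [← Set.ncard_eq_toFinset_card _ htfin]; exact htcard
  set E := htfin.toFinset.orderEmbOfFin hTcard with hE
  have hEz : ∀ i, g (E i) = 0 := by
    intro i
    have : E i ∈ htfin.toFinset := Finset.orderEmbOfFin_mem _ hTcard i
    exact hts (htfin.mem_toFinset.mp this)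
  have hchoice : ∀ i : Fin (n+1),
      ∃ c, c ∈ Icc (E ⟨2*i.val, by have := i.isLt; omega⟩)
        (E ⟨2*i.val+1, by have := i.isLt; omega⟩) ∧ h c = 0 := by
    intro i
    have hlt : (⟨2*i.val, by have := i.isLt; omega⟩ : Fin (2*n+2)) <
        ⟨2*i.val+1, by have := i.isLt; omega⟩ := by
      rw [Fin.mk_lt_mk]; omega
    obtain ⟨c, hc, hc0⟩ := hb _ _ (hEz _) (hEz _) (E.strictMono hlt)
    exact ⟨c, hc, hc0⟩
  choose c hcmem hc0 using hchoice
  have hcmono : StrictMono c := by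
    intro i j hij
    have h1 : c i ≤ E ⟨2*i.val+1, by have := i.isLt; omega⟩ := (hcmem i).2
    have h2 : E ⟨2*j.val, by have := j.isLt; omega⟩ ≤ c j := (hcmem j).1
    have h3 : (⟨2*i.val+1, by have := i.isLt; omega⟩ : Fin (2*n+2)) <
        ⟨2*j.val, by have := j.isLt; omega⟩ := by
      rw [Fin.mk_lt_mk]
      have : i.val < j.val := hij
      omega
    exact lt_of_le_of_lt h1 (lt_of_lt_of_le (E.strictMono h3) h2)
  have hle : (Finset.univ : Finset (Fin (n+1))).card ≤ hfin.toFinset.card := by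
    apply Finset.card_le_card_of_injOn c
    · intro i _
      rw [Finset.mem_coe, Set.Finite.mem_toFinset]
      exact hc0 i
    · exact fun i _ j _ hij => hcmono.injective hij
  rw [Finset.card_univ, Fintype.card_fin] at hle
  omega

lemma eq_zero_of_linear_ode {g : ℝ → ℝ} (hganal : ∀ x, AnalyticAt ℝ g x)
    {x₀ b K : ℝ} (hb : x₀ < b) (h0 : g x₀ = 0)
    (hbound : ∀ x ∈ Icc x₀ b, ‖deriv g x‖ ≤ K * ‖g x‖) : g = 0 := by
  have hdiff : ∀ x, DifferentiableAt ℝ g x := fun x => (hganal x).differentiableAt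
  have hcont : Continuous g := by
    rw [continuous_iff_continuousAt]; exact fun x => (hdiff x).continuousAt
  have key := norm_le_gronwallBound_of_norm_deriv_right_le (f := g) (f' := deriv g)
    (δ := 0) (K := K) (ε := 0) (a := x₀) (b := b)
    hcont.continuousOn
    (fun x _ => (hdiff x).hasDerivAt.hasDerivWithinAt)
    (by simp [h0])
    (fun x hx => by simpa using hbound x ⟨hx.1, hx.2.le⟩)
  have hz : ∀ x ∈ Icc x₀ b, g x = 0 := by
    intro x hx
    have h1 := key x hx
    rw [gronwallBound_ε0_δ0] at h1
    exact norm_le_zero_iff.mp h1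
  have hzmem : Icc x₀ b ∈ 𝓝 ((x₀ + b)/2) := Icc_mem_nhds (by linarith) (by linarith)
  have hev : ∀ᶠ y in 𝓝 ((x₀ + b)/2), g y = 0 := Filter.eventually_of_mem hzmem hz
  funext x
  exact AnalyticOnNhd.eqOn_zero_of_preconnected_of_eventuallyEq_zero (fun y _ => hganal y)
    isPreconnected_univ (mem_univ _) (hev.mono fun y hy => by simpa using hy) (mem_univ x)

end analysis

section key

variable {S : Set (ℝ → ℝ)} {φ : ℝ → ℝ}

theorem ext_fin (hS : KhovSet S) (hφa : ∀ x, AnalyticAt ℝ φ x)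
    (hφd : deriv φ ∈ ExtSet S φ) :
    ∀ (m : ℕ) (p : (ℝ → ℝ)[X]), p.natDegree ≤ m → Pmem S p → p.eval φ ≠ 0 →
      {x : ℝ | p.eval φ x = 0}.Finite := by
  have hc := hS.cst
  have ha := hS.add
  have hm := hS.mul
  intro m
  induction m with
  | zero =>
      intro p hdeg hpm hne
      have h0 : p.natDegree = 0 := Nat.le_zero.mp hdeg
      have hpe : p.eval φ = p.coeff 0 := by
        conv_lhs => rw [Polynomial.eq_C_of_natDegree_eq_zero h0]
        simp
      rw [hpe] at hne ⊢
      exact hS.fin _ (hpm 0) hne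
  | succ m ih =>
      intro p hdeg hpm hne
      by_cases hdm : p.natDegree ≤ m
      · exact ih p hdm hpm hne
      · have hdeg' : p.natDegree = m + 1 := by omega
        by_contra hinf0
        have hinf : {x : ℝ | p.eval φ x = 0}.Infinite := hinf0
        have hp0 : p ≠ 0 := fun h => hne (by simp [h])
        have hcoeffanal : ∀ i, ∀ x : ℝ, AnalyticAt ℝ (p.coeff i) x := fun i => hS.anal _ (hpm i)
        have hganal : ∀ x, AnalyticAt ℝ (p.eval φ) x := fun x => anal_eval hcoeffanal hφa x
        obtain ⟨q, hqm, hq⟩ := hφd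
        set R := pderivCoeff p + derivative p * q with hR
        have hRm : Pmem S R := by
          refine Pmem_add ha ?_ (Pmem_mul hc ha hm (Pmem_derivative hm hpm hc) hqm)
          intro j
          rw [coeff_pderivCoeff]
          split
          · exact hS.dmem _ (hpm j)
          · exact zero_mem hc
        have hgderiv : deriv (p.eval φ) = R.eval φ := by
          rw [deriv_eval_poly p φ hcoeffanal hφa, hR, eval_add, eval_mul, hq]
        have hpdeg : 0 < p.degree := by
          rw [degree_eq_natDegree hp0, hdeg']
          exact_mod_cast Nat.succ_pos m
        obtain ⟨k, A, B, hAm, hBm, hBdeg, heq⟩ :=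
          pdiv hc ha hm p hpm hpdeg R.natDegree R le_rfl hRm
        set a := p.leadingCoeff with haDef
        have ham : a ∈ S := hpm p.natDegree
        have hane : a ≠ 0 := leadingCoeff_ne_zero.mpr hp0
        set A' := C a ^ k * A with hA'
        set B' := C a ^ k * B with hB'
        have hA'm : Pmem S A' := Pmem_mul hc ha hm (Pmem_pow hc ha hm (Pmem_C hc ham) k) hAm
        have hB'm : Pmem S B' := Pmem_mul hc ha hm (Pmem_pow hc ha hm (Pmem_C hc ham) k) hBm
        have heq2 : C a ^ k * C a ^ k * R = A' * p + B' := by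
          rw [hA', hB']
          linear_combination (C a ^ k : (ℝ → ℝ)[X]) * heq
        have hBdeg' : B'.degree < p.degree := by
          rw [hB', ← C_pow]
          refine lt_of_le_of_lt (degree_mul_le _ _) ?_
          calc degree (C (a^k)) + degree B ≤ 0 + degree B := by
                exact add_le_add degree_C_le le_rfl
            _ = degree B := zero_add _
            _ < degree p := hBdeg
        have hpt : ∀ x : ℝ, (a x)^k * (a x)^k * deriv (p.eval φ) x
            = A'.eval φ x * p.eval φ x + B'.eval φ x := by
          intro x
          have h1 := congrArg (fun P : (ℝ → ℝ)[X] => P.eval φ x) heq2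
          simp only [eval_add, eval_mul, eval_pow, eval_C, Pi.add_apply, Pi.mul_apply,
            Pi.pow_apply] at h1
          rw [hgderiv]
          exact h1
        set Bf := B'.eval φ with hBf
        have hBanal : ∀ x, AnalyticAt ℝ Bf x :=
          fun x => anal_eval (fun i => hS.anal _ (hB'm i)) hφa x
        have hBcont : Continuous Bf :=
          continuous_iff_continuousAt.mpr fun x => (hBanal x).differentiableAt.continuousAt
        have hbetween : ∀ u v : ℝ, p.eval φ u = 0 → p.eval φ v = 0 → u < v →
            ∃ c ∈ Icc u v, Bf c = 0 := by
          intro u v huz hvz huv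
          refine exists_zero_between (e := fun x => (a x)^k * (a x)^k) hganal hne hBcont
            (fun x => mul_self_nonneg _) ?_ huv huz hvz
          intro x hx
          have h2 := hpt x
          rw [hx, mul_zero, zero_add] at h2
          exact h2.symm
        have hBinf : {x : ℝ | Bf x = 0}.Infinite := infinite_transfer hinf hbetween
        have hBzero : Bf = 0 := by
          by_contra hBne
          refine hBinf (ih B' ?_ hB'm hBne)
          by_cases hB'0 : B' = 0
          · simp [hB'0]
          · have := natDegree_lt_natDegree hB'0 hBdeg'
            omega
        have hpt2 : ∀ x : ℝ, (a x)^k * (a x)^k * deriv (p.eval φ) x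
            = A'.eval φ x * p.eval φ x := by
          intro x
          have h2 := hpt x
          have h3 : Bf x = 0 := by rw [hBzero]; rfl
          rw [h3, add_zero] at h2
          exact h2
        have hafin : {x : ℝ | a x = 0}.Finite := hS.fin a ham hane
        obtain ⟨x₀, hx₀⟩ := (hinf.diff hafin).nonempty
        have hx₀z : p.eval φ x₀ = 0 := hx₀.1
        have hx₀a : a x₀ ≠ 0 := hx₀.2
        set eF := fun x => (a x)^k * (a x)^k with heF
        have heFx₀ : eF x₀ ≠ 0 := mul_ne_zero (pow_ne_zero _ hx₀a) (pow_ne_zero _ hx₀a)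
        have hacont : Continuous a :=
          continuous_iff_continuousAt.mpr fun x => ((hS.anal a ham) x).differentiableAt.continuousAt
        have heFcont : Continuous eF := (hacont.pow k).mul (hacont.pow k)
        have hev : ∀ᶠ x in 𝓝 x₀, eF x ≠ 0 := heFcont.continuousAt.eventually_ne heFx₀
        obtain ⟨ε, hε, hball⟩ := Metric.eventually_nhds_iff.mp hev
        set b := x₀ + ε/2 with hbdef
        have hx₀b : x₀ < b := by rw [hbdef]; linarith
        have hne' : ∀ x ∈ Icc x₀ b, eF x ≠ 0 := by
          intro x hx
          apply hball
          rw [Real.dist_eq, abs_of_nonneg (by linarith [hx.1])]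
          have := hx.2
          rw [hbdef] at this
          linarith
        have hAcont : Continuous (A'.eval φ) :=
          continuous_iff_continuousAt.mpr fun x =>
            (anal_eval (fun i => hS.anal _ (hA'm i)) hφa x).differentiableAt.continuousAt
        have hccont : ContinuousOn (fun x => |A'.eval φ x / eF x|) (Icc x₀ b) :=
          ((hAcont.continuousOn.div heFcont.continuousOn fun x hx => hne' x hx)).abs
        obtain ⟨xm, hxm, hmax⟩ := isCompact_Icc.exists_isMaxOn
          ⟨x₀, ⟨le_refl x₀, hx₀b.le⟩⟩ hccont
        set K := |A'.eval φ xm / eF xm| with hK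
        have hbound : ∀ x ∈ Icc x₀ b, ‖deriv (p.eval φ) x‖ ≤ K * ‖p.eval φ x‖ := by
          intro x hx
          have h1 : deriv (p.eval φ) x = (A'.eval φ x / eF x) * p.eval φ x := by
            have h2 := hpt2 x
            rw [div_mul_eq_mul_div, eq_div_iff (hne' x hx)]
            have heFeq : eF x = (a x)^k * (a x)^k := rfl
            linear_combination h2
          rw [h1, Real.norm_eq_abs, Real.norm_eq_abs, abs_mul]
          exact mul_le_mul_of_nonneg_right (hmax hx) (abs_nonneg _)
        exact hne (eq_zero_of_linear_ode hganal hx₀b hx₀z hbound)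

end key

section assemble

theorem khov_ext {S : Set (ℝ → ℝ)} {φ : ℝ → ℝ} (hS : KhovSet S)
    (hφa : ∀ x, AnalyticAt ℝ φ x) (hφd : deriv φ ∈ ExtSet S φ) :
    KhovSet (ExtSet S φ) := by
  have hc := hS.cst
  have ha := hS.add
  have hm := hS.mul
  constructor
  · rintro g ⟨p, hp, rfl⟩ x
    exact anal_eval (fun i => hS.anal _ (hp i)) hφa x
  · exact ext_cst hc
  · exact ext_add ha
  · exact ext_mul hc ha hm
  · rintro g ⟨p, hp, rfl⟩
    obtain ⟨q, hqm, hq⟩ := hφd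
    refine ⟨pderivCoeff p + derivative p * q, ?_, ?_⟩
    · refine Pmem_add ha ?_ (Pmem_mul hc ha hm (Pmem_derivative hm hp hc) hqm)
      intro j
      rw [coeff_pderivCoeff]
      split
      · exact hS.dmem _ (hp j)
      · exact zero_mem hc
    · rw [deriv_eval_poly p φ (fun i => hS.anal _ (hp i)) hφa, eval_add, eval_mul, hq]
  · rintro g ⟨p, hp, rfl⟩ hne
    exact ext_fin hS hφa hφd p.natDegree p le_rfl hp hne

/-- The base set: polynomial functions. -/
def polySet : Set (ℝ → ℝ) := {g | ∃ p : Polynomial ℝ, g = fun x => p.eval x}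

lemma anal_polyeval (p : Polynomial ℝ) (x : ℝ) :
    AnalyticAt ℝ (fun y => p.eval y) x := by
  induction p using Polynomial.induction_on' with
  | add p q hp hq => simp only [eval_add]; exact hp.add hq
  | monomial n a =>
      simp only [eval_monomial]
      exact analyticAt_const.mul ((analyticAt_id (𝕜 := ℝ) (z := x) (E := ℝ)).pow n)

lemma polySet_khov : KhovSet polySet := by
  constructor
  · rintro g ⟨p, rfl⟩ x
    exact anal_polyeval p x
  · intro c
    exact ⟨Polynomial.C c, by funext x; simp⟩
  · rintro g ⟨p, rfl⟩ h ⟨q, rfl⟩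
    exact ⟨p + q, by funext x; simp⟩
  · rintro g ⟨p, rfl⟩ h ⟨q, rfl⟩
    exact ⟨p * q, by funext x; simp⟩
  · rintro g ⟨p, rfl⟩
    exact ⟨derivative p, by funext x; exact Polynomial.deriv (p := p)⟩
  · rintro g ⟨p, rfl⟩ hne
    have hp0 : p ≠ 0 := by
      rintro rfl
      exact hne (by funext x; simp)
    have : {x : ℝ | (fun y => p.eval y) x = 0} = {x : ℝ | p.IsRoot x} := rfl
    rw [this]
    exact p.finite_setOf_isRoot hp0

lemma id_mem_polySet : (fun x : ℝ => x) ∈ polySet := ⟨Polynomial.X, by funext x; simp⟩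

variable {r : ℕ}

/-- the increasing chain of Khovanskii sets associated to a Pfaffian chain -/
def chainSets (f : Fin r → ℝ → ℝ) : ℕ → Set (ℝ → ℝ)
  | 0 => polySet
  | k+1 => ExtSet (chainSets f k) (if h : k < r then f ⟨k, h⟩ else 0)

end assemble

section chain

variable {r : ℕ} {f : Fin r → ℝ → ℝ}

lemma chain_main (hch : IsPfaffianChain f) :
    ∀ k, k ≤ r → KhovSet (chainSets f k) ∧ (fun x : ℝ => x) ∈ chainSets f k ∧
      (∀ j : Fin r, j.val < k → f j ∈ chainSets f k) := by
  intro k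
  induction k with
  | zero =>
      exact fun _ => ⟨polySet_khov, id_mem_polySet, fun j hj => absurd hj (by omega)⟩
  | succ k ihk =>
      intro hk1
      obtain ⟨hk, hid, hmem⟩ := ihk (by omega)
      have h : k < r := by omega
      set i : Fin r := ⟨k, h⟩ with hi
      have hred : chainSets f (k+1) = ExtSet (chainSets f k) (f i) := by
        show ExtSet _ _ = _
        rw [dif_pos h]
      have hidE : (fun x : ℝ => x) ∈ ExtSet (chainSets f k) (f i) := subset_ext hk.cst hid
      have hfmem : ∀ j : Fin r, j.val < k + 1 → f j ∈ ExtSet (chainSets f k) (f i) := by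
        intro j hj
        by_cases hjk : j.val < k
        · exact subset_ext hk.cst (hmem j hjk)
        · have hji : j = i := Fin.ext (by simp [hi]; omega)
          rw [hji]
          exact self_mem_ext hk.cst
      obtain ⟨hanal, hP⟩ := hch
      obtain ⟨P, hPx⟩ := hP i
      have hφd : deriv (f i) ∈ ExtSet (chainSets f k) (f i) := by
        have hfun : deriv (f i) = fun x =>
            MvPolynomial.eval (fun v : Fin (k+2) =>
              (Fin.cons (fun y : ℝ => y) (fun j : Fin (k+1) => f (Fin.castLE i.isLt j)) :
                Fin (k+2) → ℝ → ℝ) v x) P := by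
          funext x
          rw [hPx x]
          refine congrArg (fun w : Fin (k+2) → ℝ => MvPolynomial.eval w P) ?_
          funext v
          induction v using Fin.cases with
          | zero => simp
          | succ j => simp
        rw [hfun]
        refine mv_mem (ext_cst hk.cst) (ext_add hk.add) (ext_mul hk.cst hk.add hk.mul) _ ?_ P
        intro v
        induction v using Fin.cases with
        | zero => simpa using hidE
        | succ j =>
            simp only [Fin.cons_succ]
            exact hfmem _ (by simp; exact Nat.lt_succ_iff.mp j.isLt)
      have hkh : KhovSet (chainSets f (k+1)) := by
        rw [hred]
        exact khov_ext hk (hanal i) hφd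
      refine ⟨hkh, ?_, ?_⟩
      · rw [hred]; exact hidE
      · intro j hj; rw [hred]; exact hfmem j hj

end chain

end PfaffAux

/-- A non-constant Pfaffian function `ℝ → ℝ` has finitely many zeroes. -/
theorem pfaffian_nonconstant_finite_zeros (f : ℝ → ℝ) (hf : IsPfaffian f)
    (hnc : ¬ ∃ c : ℝ, ∀ x : ℝ, f x = c) :
    {x : ℝ | f x = 0}.Finite := by
  classical
  obtain ⟨r, F, hch, Q, hQ⟩ := hf
  obtain ⟨hK, hid, hmem⟩ := PfaffAux.chain_main hch r le_rfl
  have hfm : f ∈ PfaffAux.chainSets F r := by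
    have h2 : f = fun x =>
        MvPolynomial.eval (fun v : Fin (r+1) =>
          (Fin.cons (fun y : ℝ => y) F : Fin (r+1) → ℝ → ℝ) v x) Q := by
      funext x
      rw [hQ x]
      refine congrArg (fun w : Fin (r+1) → ℝ => MvPolynomial.eval w Q) ?_
      funext v
      induction v using Fin.cases with
      | zero => simp
      | succ j => simp
    rw [h2]
    refine PfaffAux.mv_mem hK.cst hK.add hK.mul _ ?_ Q
    intro v
    induction v using Fin.cases with
    | zero => simpa using hid
    | succ j =>
        simp only [Fin.cons_succ]
        exact hmem j j.isLt
  have hne : f ≠ 0 := by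
    rintro rfl
    exact hnc ⟨0, fun x => rfl⟩
  exact hK.fin f hfm hne
end

section
/- If f : ℝ → ℝ and g : ℝ → ℝ are Pfaffian functions, then their composition f ∘ g : ℝ → ℝ is a Pfaffian function. -/
open MvPolynomial

section PfaffianAux

section PfaffianAux

lemma my_eval_bind₁ {n m : ℕ} (x : Fin m → ℝ) (g : Fin n → MvPolynomial (Fin m) ℝ)
    (p : MvPolynomial (Fin n) ℝ) :
    eval x (bind₁ g p) = eval (fun i => eval x (g i)) p :=
  eval₂Hom_bind₁ (RingHom.id ℝ) x g p

lemma my_cons_mk_succ {α : Type*} {n : ℕ} (a : α) (t : Fin n → α) (k : ℕ) (h : k + 1 < n + 1) :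
    (Fin.cons a t : Fin (n + 1) → α) ⟨k + 1, h⟩ = t ⟨k, Nat.lt_of_succ_lt_succ h⟩ := by
  have h2 : (⟨k + 1, h⟩ : Fin (n + 1)) = Fin.succ ⟨k, Nat.lt_of_succ_lt_succ h⟩ := rfl
  rw [h2, Fin.cons_succ]

lemma my_cons_comp_castLE {α : Type*} {m n : ℕ} (h : m + 1 ≤ n + 1) (a : α) (t : Fin n → α) :
    (Fin.cons a t : Fin (n + 1) → α) ∘ Fin.castLE h
      = Fin.cons a fun k : Fin m => t (Fin.castLE (Nat.succ_le_succ_iff.mp h) k) := by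
  funext j
  obtain ⟨jv, hj⟩ := j
  cases jv with
  | zero => rfl
  | succ k =>
      show (Fin.cons a t : Fin (n + 1) → α) (Fin.castLE h ⟨k + 1, hj⟩) = _
      have hc : Fin.castLE h ⟨k + 1, hj⟩ = ⟨k + 1, lt_of_lt_of_le hj h⟩ := rfl
      rw [hc, my_cons_mk_succ, my_cons_mk_succ]
      rfl

lemma my_analyticAt_eval {n : ℕ} (c : Fin n → ℝ → ℝ) (x : ℝ)
    (hc : ∀ i, AnalyticAt ℝ (c i) x) (P : MvPolynomial (Fin n) ℝ) :
    AnalyticAt ℝ (fun y => eval (fun i => c i y) P) x := by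
  induction P using MvPolynomial.induction_on with
  | C a => simpa using analyticAt_const
  | add p q hp hq => simpa [eval_add] using hp.fun_add hq
  | mul_X p i hp => simpa [eval_mul] using hp.fun_mul (hc i)

lemma my_hasDerivAt_eval {n : ℕ} (c : Fin n → ℝ → ℝ) (d : Fin n → ℝ) (x : ℝ)
    (hc : ∀ i, HasDerivAt (c i) (d i) x) (P : MvPolynomial (Fin n) ℝ) :
    HasDerivAt (fun y => eval (fun i => c i y) P)
      (∑ i, eval (fun i => c i x) (pderiv i P) * d i) x := by
  induction P using MvPolynomial.induction_on with
  | C a =>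
      simpa using hasDerivAt_const x (a : ℝ)
  | add p q hp hq =>
      have := hp.fun_add hq
      simpa [eval_add, Finset.sum_add_distrib, add_mul] using this
  | mul_X p i hp =>
      have h1 := hp.fun_mul (hc i)
      have h2 : (∑ j, eval (fun k => c k x) (pderiv j (p * X i)) * d j)
          = (∑ j, eval (fun k => c k x) (pderiv j p) * d j) * c i x
            + eval (fun k => c k x) p * d i := by
        simp only [pderiv_mul, eval_add, eval_mul, eval_X, add_mul, Finset.sum_add_distrib,
          Finset.sum_mul]
        congr 1
        · apply Finset.sum_congr rfl; intro j _; ring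
        · classical
          rw [Finset.sum_eq_single i]
          · simp
          · intro j _ hj
            simp [pderiv_X_of_ne (Ne.symm hj)]
          · simp
      rw [h2]
      simpa [eval_mul, eval_X] using h1

/-- Concatenated chain: `v`'s chain followed by `u`'s chain composed with `g`. -/
noncomputable def pfComp {s r : ℕ} (v : Fin s → ℝ → ℝ) (u : Fin r → ℝ → ℝ) (g : ℝ → ℝ)
    (i : Fin (s + r)) : ℝ → ℝ :=
  if h : (i : ℕ) < s then v ⟨i, h⟩
  else fun x => u ⟨(i : ℕ) - s, by have := i.isLt; omega⟩ (g x)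

lemma pfComp_lt {s r : ℕ} (v : Fin s → ℝ → ℝ) (u : Fin r → ℝ → ℝ) (g : ℝ → ℝ)
    {i : Fin (s + r)} (h : (i : ℕ) < s) : pfComp v u g i = v ⟨i, h⟩ := dif_pos h

lemma pfComp_ge {s r : ℕ} (v : Fin s → ℝ → ℝ) (u : Fin r → ℝ → ℝ) (g : ℝ → ℝ)
    {i : Fin (s + r)} (h : ¬ (i : ℕ) < s) :
    pfComp v u g i = fun x => u ⟨(i : ℕ) - s, by have := i.isLt; omega⟩ (g x) := dif_neg h

/-- The first `s + 1` entries of the value vector of the concatenated chain are those of `v`. -/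
lemma pfComp_prefix {s r : ℕ} (v : Fin s → ℝ → ℝ) (u : Fin r → ℝ → ℝ) (g : ℝ → ℝ)
    (x : ℝ) {n : ℕ} (hle : n ≤ s + r) (hs : s ≤ n) :
    (Fin.cons x (fun j : Fin n => pfComp v u g (Fin.castLE hle j) x) : Fin (n + 1) → ℝ)
      ∘ Fin.castLE (Nat.succ_le_succ hs)
      = Fin.cons x (fun j : Fin s => v j x) := by
  funext j
  obtain ⟨jv, hj⟩ := j
  cases jv with
  | zero => rfl
  | succ m =>
      have hms : m < s := by omega
      show (Fin.cons x (fun j : Fin n => pfComp v u g (Fin.castLE hle j) x) : Fin (n + 1) → ℝ)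
          (Fin.castLE (Nat.succ_le_succ hs) ⟨m + 1, hj⟩)
        = (Fin.cons x (fun j : Fin s => v j x) : Fin (s + 1) → ℝ) ⟨m + 1, hj⟩
      have h1 : Fin.castLE (Nat.succ_le_succ hs) ⟨m + 1, hj⟩
          = (⟨m + 1, by omega⟩ : Fin (n + 1)) := rfl
      rw [h1, my_cons_mk_succ, my_cons_mk_succ]
      rw [pfComp_lt v u g
        (show ((Fin.castLE hle ⟨m, by omega⟩ : Fin (s + r)) : ℕ) < s from hms)]
      rfl

end PfaffianAux


section Blocks

variable {s r : ℕ} (v : Fin s → ℝ → ℝ) (u : Fin r → ℝ → ℝ) (g : ℝ → ℝ)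

/-- The vector of coordinate functions of the value vector of `v`'s chain. -/
lemma pf_coord_eq : ∀ y : ℝ,
    (fun i => (Fin.cons (fun y => y) v : Fin (s + 1) → ℝ → ℝ) i y)
      = Fin.cons y (fun j : Fin s => v j y) := by
  intro y
  funext i
  refine Fin.cases rfl (fun k => rfl) i

/-- `g` is analytic. -/
lemma pf_gA (hvA : ∀ (i : Fin s) (x : ℝ), AnalyticAt ℝ (v i) x)
    (Qg : MvPolynomial (Fin (s + 1)) ℝ)
    (hQg : ∀ x : ℝ, g x = eval (Fin.cons x fun j : Fin s => v j x) Qg) :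
    ∀ x : ℝ, AnalyticAt ℝ g x := by
  intro x
  have hg : g = fun y =>
      eval (fun i => (Fin.cons (fun y => y) v : Fin (s + 1) → ℝ → ℝ) i y) Qg := by
    funext y
    rw [pf_coord_eq v y, ← hQg y]
  rw [hg]
  refine my_analyticAt_eval _ x ?_ Qg
  intro i
  refine Fin.cases ?_ ?_ i
  · simp only [Fin.cons_zero]
    exact analyticAt_id
  · intro k
    simpa using hvA k x

/-- There is a polynomial computing the derivative of `g` from the values of the chain. -/
lemma pf_gD (hvA : ∀ (i : Fin s) (x : ℝ), AnalyticAt ℝ (v i) x)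
    (Pv : (i : Fin s) → MvPolynomial (Fin (i.val + 2)) ℝ)
    (hPv : ∀ (i : Fin s) (x : ℝ), deriv (v i) x
      = eval (Fin.cons x fun j : Fin (i.val + 1) => v (Fin.castLE i.isLt j) x) (Pv i))
    (Qg : MvPolynomial (Fin (s + 1)) ℝ)
    (hQg : ∀ x : ℝ, g x = eval (Fin.cons x fun j : Fin s => v j x) Qg) :
    ∃ D : MvPolynomial (Fin (s + 1)) ℝ, ∀ x : ℝ,
      HasDerivAt g (eval (Fin.cons x fun j : Fin s => v j x) D) x := by
  classical
  refine ⟨∑ k, pderiv k Qg *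
    (Fin.cons (1 : MvPolynomial (Fin (s + 1)) ℝ)
      (fun k : Fin s => rename (Fin.castLE (Nat.succ_le_succ k.isLt)) (Pv k))
      : Fin (s + 1) → MvPolynomial (Fin (s + 1)) ℝ) k,
    fun x => ?_⟩
  have hcoord : ∀ k : Fin (s + 1),
      HasDerivAt ((Fin.cons (fun y => y) v : Fin (s + 1) → ℝ → ℝ) k)
        (eval (Fin.cons x fun j : Fin s => v j x)
          ((Fin.cons (1 : MvPolynomial (Fin (s + 1)) ℝ)
            (fun k : Fin s => rename (Fin.castLE (Nat.succ_le_succ k.isLt)) (Pv k))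
            : Fin (s + 1) → MvPolynomial (Fin (s + 1)) ℝ) k)) x := by
    intro k
    refine Fin.cases ?_ ?_ k
    · simpa using hasDerivAt_id' x
    · intro k
      have hvd := (hvA k x).differentiableAt.hasDerivAt
      rw [hPv k x] at hvd
      rw [Fin.cons_succ, Fin.cons_succ, eval_rename, my_cons_comp_castLE]
      exact hvd
  have h := my_hasDerivAt_eval _ _ x hcoord Qg
  have hg : (fun y =>
      eval (fun i => (Fin.cons (fun y => y) v : Fin (s + 1) → ℝ → ℝ) i y) Qg) = g := by
    funext y
    rw [pf_coord_eq v y, ← hQg y]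
  rw [hg] at h
  convert h using 1
  rw [map_sum]
  refine Finset.sum_congr rfl fun k _ => ?_
  rw [eval_mul, pf_coord_eq v x]

/-- First block: the chain condition for indices `< s`. -/
lemma pf_first_block (Pv : (i : Fin s) → MvPolynomial (Fin (i.val + 2)) ℝ)
    (hPv : ∀ (i : Fin s) (x : ℝ), deriv (v i) x
      = eval (Fin.cons x fun j : Fin (i.val + 1) => v (Fin.castLE i.isLt j) x) (Pv i))
    (i : Fin (s + r)) (h : (i : ℕ) < s) :
    ∃ P : MvPolynomial (Fin (i.val + 2)) ℝ, ∀ x : ℝ,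
      deriv (pfComp v u g i) x
        = eval (Fin.cons x fun j : Fin (i.val + 1) => pfComp v u g (Fin.castLE i.isLt j) x) P := by
  refine ⟨Pv ⟨i, h⟩, fun x => ?_⟩
  have harg : (fun j : Fin ((i : ℕ) + 1) => pfComp v u g (Fin.castLE i.isLt j) x)
      = fun j : Fin ((i : ℕ) + 1) => v (Fin.castLE h j) x := by
    funext j
    rw [pfComp_lt v u g
      (show ((Fin.castLE i.isLt j : Fin (s + r)) : ℕ) < s from lt_of_lt_of_le j.isLt h)]
    rfl
  rw [pfComp_lt v u g h, harg]
  exact hPv ⟨i, h⟩ x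

/-- Second block: the chain condition for indices `≥ s`. -/
lemma pf_second_block
    (Qg : MvPolynomial (Fin (s + 1)) ℝ)
    (hQg : ∀ x : ℝ, g x = eval (Fin.cons x fun j : Fin s => v j x) Qg)
    (D : MvPolynomial (Fin (s + 1)) ℝ)
    (hgD : ∀ x : ℝ, HasDerivAt g (eval (Fin.cons x fun j : Fin s => v j x) D) x)
    (huA : ∀ (i : Fin r) (x : ℝ), AnalyticAt ℝ (u i) x)
    (Pu : (i : Fin r) → MvPolynomial (Fin (i.val + 2)) ℝ)
    (hPu : ∀ (i : Fin r) (x : ℝ), deriv (u i) x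
      = eval (Fin.cons x fun j : Fin (i.val + 1) => u (Fin.castLE i.isLt j) x) (Pu i))
    (i : Fin (s + r)) (h : ¬ (i : ℕ) < s) :
    ∃ P : MvPolynomial (Fin (i.val + 2)) ℝ, ∀ x : ℝ,
      deriv (pfComp v u g i) x
        = eval (Fin.cons x fun j : Fin (i.val + 1) => pfComp v u g (Fin.castLE i.isLt j) x) P := by
  have hsle : s ≤ (i : ℕ) := Nat.le_of_not_lt h
  have hir : (i : ℕ) < s + r := i.isLt
  have hd : (i : ℕ) - s < r := by omega
  have hs1 : s + 1 ≤ (i : ℕ) + 2 := by omega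
  obtain ⟨σ, hσ⟩ : ∃ σ' : Fin (((⟨(i : ℕ) - s, hd⟩ : Fin r) : ℕ) + 2)
        → MvPolynomial (Fin ((i : ℕ) + 2)) ℝ,
      σ' = Fin.cons (rename (Fin.castLE hs1) Qg)
        (fun j : Fin (((⟨(i : ℕ) - s, hd⟩ : Fin r) : ℕ) + 1) => X ⟨s + 1 + (j : ℕ),
          by have hj : (j : ℕ) < (i : ℕ) - s + 1 := j.isLt; omega⟩) := ⟨_, rfl⟩
  refine ⟨bind₁ σ (Pu ⟨(i : ℕ) - s, hd⟩) * rename (Fin.castLE hs1) D, fun x => ?_⟩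
  obtain ⟨E, hE⟩ : ∃ E' : Fin ((i : ℕ) + 2) → ℝ,
      E' = Fin.cons x (fun j : Fin ((i : ℕ) + 1) => pfComp v u g (Fin.castLE i.isLt j) x) :=
    ⟨_, rfl⟩
  have hEV : E ∘ Fin.castLE hs1 = Fin.cons x (fun j : Fin s => v j x) := by
    rw [hE]; exact pfComp_prefix v u g x i.isLt (by omega)
  have hEg : eval E (rename (Fin.castLE hs1) Qg) = g x := by
    rw [eval_rename, hEV, ← hQg x]
  have hσval : (fun k => eval E (σ k))
      = Fin.cons (g x) (fun j : Fin (((⟨(i : ℕ) - s, hd⟩ : Fin r) : ℕ) + 1) =>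
          u (Fin.castLE (⟨(i : ℕ) - s, hd⟩ : Fin r).isLt j) (g x)) := by
    funext k
    obtain ⟨kv, hk⟩ := k
    cases kv with
    | zero => rw [hσ]; exact hEg
    | succ m =>
        have hval : ((⟨(i : ℕ) - s, hd⟩ : Fin r) : ℕ) = (i : ℕ) - s := rfl
        rw [hσ, my_cons_mk_succ, my_cons_mk_succ, eval_X, hE]
        have h3 : (⟨s + 1 + m, by omega⟩ : Fin ((i : ℕ) + 2))
            = ⟨(s + m) + 1, by omega⟩ := by rw [Fin.mk_eq_mk]; omega
        rw [h3, my_cons_mk_succ]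
        have hlt : ¬ ((Fin.castLE i.isLt ⟨s + m, by omega⟩ : Fin (s + r)) : ℕ) < s := by
          simp only [Fin.coe_castLE]; omega
        rw [congrFun (pfComp_ge v u g hlt) x]
        apply congrArg (fun z : Fin r => u z (g x))
        apply Fin.eq_of_val_eq
        simp only [Fin.coe_castLE]
        omega
  have hu' := (huA ⟨(i : ℕ) - s, hd⟩ (g x)).differentiableAt.hasDerivAt
  rw [hPu ⟨(i : ℕ) - s, hd⟩ (g x)] at hu'
  have hcomp := hu'.comp x (hgD x)
  rw [pfComp_ge v u g h, ← hE, eval_mul, my_eval_bind₁, hσval, eval_rename, hEV]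
  exact hcomp.deriv

/-- The polynomial representing `f ∘ g` in the concatenated chain. -/
lemma pf_final (f : ℝ → ℝ)
    (Qg : MvPolynomial (Fin (s + 1)) ℝ)
    (hQg : ∀ x : ℝ, g x = eval (Fin.cons x fun j : Fin s => v j x) Qg)
    (Qf : MvPolynomial (Fin (r + 1)) ℝ)
    (hQf : ∀ x : ℝ, f x = eval (Fin.cons x fun j : Fin r => u j x) Qf) :
    ∃ Q : MvPolynomial (Fin (s + r + 1)) ℝ, ∀ x : ℝ,
      (f ∘ g) x = eval (Fin.cons x fun j : Fin (s + r) => pfComp v u g j x) Q := by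
  have hs1 : s + 1 ≤ s + r + 1 := by omega
  obtain ⟨τ, hτ⟩ : ∃ τ' : Fin (r + 1) → MvPolynomial (Fin (s + r + 1)) ℝ,
      τ' = Fin.cons (rename (Fin.castLE hs1) Qg)
        (fun j : Fin r => X ⟨s + 1 + (j : ℕ), by have := j.isLt; omega⟩) := ⟨_, rfl⟩
  refine ⟨bind₁ τ Qf, fun x => ?_⟩
  obtain ⟨E, hE⟩ : ∃ E' : Fin (s + r + 1) → ℝ,
      E' = Fin.cons x (fun j : Fin (s + r) => pfComp v u g j x) := ⟨_, rfl⟩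
  have hEV : E ∘ Fin.castLE hs1 = Fin.cons x (fun j : Fin s => v j x) := by
    rw [hE]; exact pfComp_prefix v u g x le_rfl (by omega)
  have hEg : eval E (rename (Fin.castLE hs1) Qg) = g x := by
    rw [eval_rename, hEV, ← hQg x]
  have hτval : (fun k => eval E (τ k))
      = Fin.cons (g x) (fun j : Fin r => u j (g x)) := by
    funext k
    obtain ⟨kv, hk⟩ := k
    cases kv with
    | zero => rw [hτ]; exact hEg
    | succ m =>
        rw [hτ, my_cons_mk_succ, my_cons_mk_succ, eval_X, hE]
        have h3 : (⟨s + 1 + m, by omega⟩ : Fin (s + r + 1))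
            = ⟨(s + m) + 1, by omega⟩ := by rw [Fin.mk_eq_mk]; omega
        rw [h3, my_cons_mk_succ]
        have hlt : ¬ (((⟨s + m, by omega⟩ : Fin (s + r))) : ℕ) < s := by
          simp only [Fin.val_mk]; omega
        rw [congrFun (pfComp_ge v u g hlt) x]
        apply congrArg (fun z : Fin r => u z (g x))
        apply Fin.eq_of_val_eq
        simp only [Fin.val_mk]
        omega
  rw [Function.comp_apply, hQf (g x), ← hE, my_eval_bind₁, hτval]

end Blocks

/-- The set of Pfaffian functions is stable by composition. -/
theorem isPfaffian_comp (f g : ℝ → ℝ) (hf : IsPfaffian f) (hg : IsPfaffian g) :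
    IsPfaffian (f ∘ g) := by
  classical
  obtain ⟨r, u, ⟨huA, huD⟩, Qf, hQf⟩ := hf
  obtain ⟨s, v, ⟨hvA, hvD⟩, Qg, hQg⟩ := hg
  choose Pu hPu using huD
  choose Pv hPv using hvD
  have hgA := pf_gA v g hvA Qg hQg
  obtain ⟨D, hgD⟩ := pf_gD v g hvA Pv hPv Qg hQg
  refine ⟨s + r, pfComp v u g, ⟨?_, ?_⟩, ?_⟩
  · intro i x
    by_cases h : (i : ℕ) < s
    · rw [pfComp_lt v u g h]
      exact hvA _ x
    · rw [pfComp_ge v u g h]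
      exact (huA _ (g x)).comp (hgA x)
  · intro i
    by_cases h : (i : ℕ) < s
    · exact pf_first_block v u g Pv hPv i h
    · exact pf_second_block v u g Qg hQg D hgD huA Pu hPu i h
  · exact pf_final v u g f Qg hQg Qf hQf
end PfaffianAux
end

section
/- The function g : ℝ → ℝ defined by g(x) = (sech²(x) + 3·sech²(3x)) / sech²(2x), where sech(t) = 1/cosh(t), attains a global minimum over ℝ at some point a with a ∈ (0.45, 0.46), and the minimum value α = g(a) satisfies α ∈ (3.14, 3.15). -/
/-- `sech(t) = 1/cosh(t)`. -/
noncomputable def sech (t : ℝ) : ℝ := 1 / Real.cosh t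

/-- `g(x) = (sech²(x) + 3·sech²(3x)) / sech²(2x)`. -/
noncomputable def gFun (x : ℝ) : ℝ :=
  (sech x ^ 2 + 3 * sech (3 * x) ^ 2) / sech (2 * x) ^ 2

/-- Auxiliary rational function: `gFun x = hFun (cosh (2x))`. -/
noncomputable def hFun (u : ℝ) : ℝ := 8*u^2*(u^2-u+1) / ((u+1)*(2*u-1)^2)

lemma gFun_eq (x : ℝ) : gFun x = hFun (Real.cosh (2*x)) := by
  have hc : 1 ≤ Real.cosh x := Real.one_le_cosh x
  have h2 : Real.cosh (2*x) = 2*Real.cosh x^2 - 1 := by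
    rw [Real.cosh_two_mul, Real.sinh_sq]; ring
  have h3 : Real.cosh (3*x) = 4*Real.cosh x^3 - 3*Real.cosh x := Real.cosh_three_mul x
  set c := Real.cosh x with hcdef
  have hc0 : c ≠ 0 := by intro h; rw [h] at hc; norm_num at hc
  have h2c : (2*c^2-1) ≠ 0 := by nlinarith
  have h4c : (4*c^2-3) ≠ 0 := by nlinarith
  have h3c : (4*c^3-3*c) ≠ 0 := by
    have hr : 4*c^3-3*c = c*(4*c^2-3) := by ring
    rw [hr]; exact mul_ne_zero hc0 h4c
  have h2c1 : (2*c^2-1+1) ≠ 0 := by nlinarith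
  have h2c2 : (2*(2*c^2-1)-1) ≠ 0 := by nlinarith
  simp only [gFun, sech, hFun, h2, h3, ← hcdef]
  have h4c' : c^2*4-3 ≠ 0 := by contrapose! h4c; linarith
  have h2c2' : 2*(c^2*2-1)-1 ≠ 0 := by contrapose! h2c2; linarith
  field_simp
  ring

lemma hasDerivAt_hFun (u : ℝ) (hu : 1 ≤ u) :
    HasDerivAt hFun
      ((8*u*(4*u^5-13*u^3+10*u^2-6*u+2))/(((u+1)*(2*u-1)^2)^2)) u := by
  have h21 : (0:ℝ) < 2*u-1 := by linarith
  have hD : (u+1)*(2*u-1)^2 ≠ 0 := by positivity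
  have hN : HasDerivAt (fun v : ℝ => 8*v^2*(v^2-v+1)) (32*u^3-24*u^2+16*u) u := by
    have h : HasDerivAt (fun v : ℝ => 8*v^2*(v^2-v+1)) _ u := (((hasDerivAt_pow 2 u).const_mul (8:ℝ)).mul
      (((hasDerivAt_pow 2 u).sub (hasDerivAt_id u)).add_const 1))
    convert h using 1
    push_cast; ring
  have hDen : HasDerivAt (fun v : ℝ => (v+1)*(2*v-1)^2) (12*u^2-3) u := by
    have h : HasDerivAt (fun v : ℝ => (v+1)*(2*v-1)^2) _ u := ((hasDerivAt_id u).add_const 1).mul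
      ((((hasDerivAt_id u).const_mul 2).sub_const 1).pow 2)
    convert h using 1
    simp only [id_eq]; push_cast; ring
  have h : HasDerivAt hFun _ u := hN.div hDen hD
  convert h using 1
  rw [div_eq_div_iff (by positivity) (by positivity)]
  ring

lemma hFun_anti : StrictAntiOn hFun (Set.Icc 1 1.4335) := by
  apply strictAntiOn_of_deriv_neg (convex_Icc _ _)
  · intro v hv
    exact (hasDerivAt_hFun v hv.1).continuousAt.continuousWithinAt
  · intro v hv
    rw [interior_Icc] at hv
    obtain ⟨h1, h2⟩ := hv
    rw [(hasDerivAt_hFun v h1.le).deriv]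
    have h21 : (0:ℝ) < 2*v-1 := by linarith
    apply div_neg_of_neg_of_pos
    · have hp : 4*v^5-13*v^3+10*v^2-6*v+2 < 0 := by
        nlinarith [sq_nonneg (v-1), sq_nonneg (v-1.4335), mul_pos (sub_pos.2 h1) (sub_pos.2 h2),
          sq_nonneg (v-1.2),
          mul_nonneg (mul_nonneg (sub_pos.2 h1).le (sub_pos.2 h2).le) (sub_pos.2 h1).le,
          mul_nonneg (mul_nonneg (sub_pos.2 h1).le (sub_pos.2 h2).le) (sub_pos.2 h2).le,
          sq_nonneg (v^2-2)]
      nlinarith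
    · positivity

lemma hFun_mono : StrictMonoOn hFun (Set.Ici 1.444) := by
  apply strictMonoOn_of_deriv_pos (convex_Ici _)
  · intro v hv
    have : (1:ℝ) ≤ v := le_trans (by norm_num) hv
    exact (hasDerivAt_hFun v this).continuousAt.continuousWithinAt
  · intro v hv
    rw [interior_Ici] at hv
    have h1 : (1.444:ℝ) ≤ v := hv.le
    rw [(hasDerivAt_hFun v (le_trans (by norm_num) h1)).deriv]
    have h21 : (0:ℝ) < 2*v-1 := by linarith
    apply div_pos
    · have hp : 0 < 4*v^5-13*v^3+10*v^2-6*v+2 := by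
        nlinarith [sq_nonneg (v-1.444), sq_nonneg (v^2-2.1),
          mul_nonneg (sub_nonneg.2 h1) (sq_nonneg (v-1.444)),
          mul_nonneg (sub_nonneg.2 h1) (sq_nonneg v),
          pow_le_pow_left₀ (by norm_num : (0:ℝ) ≤ 1.444) h1 2]
      nlinarith
    · positivity

lemma exp9_bounds : 2.4593 < Real.exp 0.9 ∧ Real.exp 0.9 < 2.4597 := by
  have h := Real.exp_bound (x := 0.9) (by rw [abs_of_nonneg] <;> norm_num) (n := 7) (by norm_num)
  rw [abs_le] at h
  have hs : ∑ m ∈ Finset.range 7, (0.9:ℝ) ^ m / m.factorial =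
      1 + 0.9 + 0.81/2 + 0.729/6 + 0.6561/24 + 0.59049/120 + 0.531441/720 := by
    simp [Finset.sum_range_succ]
    norm_num [Nat.factorial]
  rw [hs] at h
  have hb : |(0.9:ℝ)| ^ 7 * ((7:ℕ).succ / ((7:ℕ).factorial * 7)) ≤ 0.00011 := by
    rw [abs_of_pos (by norm_num)]
    norm_num [Nat.factorial]
  constructor <;> nlinarith [h.1, h.2]

lemma exp92_bounds : 2.509 < Real.exp 0.92 ∧ Real.exp 0.92 < 2.5094 := by
  have h := Real.exp_bound (x := 0.92) (by rw [abs_of_nonneg] <;> norm_num) (n := 7) (by norm_num)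
  rw [abs_le] at h
  have hs : ∑ m ∈ Finset.range 7, (0.92:ℝ) ^ m / m.factorial =
      1 + 0.92 + 0.92^2/2 + 0.92^3/6 + 0.92^4/24 + 0.92^5/120 + 0.92^6/720 := by
    simp [Finset.sum_range_succ]
    norm_num [Nat.factorial]
  rw [hs] at h
  have hb : |(0.92:ℝ)| ^ 7 * ((7:ℕ).succ / ((7:ℕ).factorial * 7)) ≤ 0.00013 := by
    rw [abs_of_pos (by norm_num)]
    norm_num [Nat.factorial]
  constructor <;> nlinarith [h.1, h.2]

lemma cosh9_lt : Real.cosh 0.9 < 1.4335 := by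
  obtain ⟨hl, hu⟩ := exp9_bounds
  rw [Real.cosh_eq, Real.exp_neg]
  have h1 : (Real.exp 0.9)⁻¹ < 0.40663 := by
    rw [inv_lt_comm₀ (by positivity) (by norm_num)]
    linarith
  linarith

lemma cosh92_gt : 1.444 < Real.cosh 0.92 := by
  obtain ⟨hl, hu⟩ := exp92_bounds
  rw [Real.cosh_eq, Real.exp_neg]
  have h1 : (0.3985:ℝ) < (Real.exp 0.92)⁻¹ := by
    rw [lt_inv_comm₀ (by norm_num) (by positivity)]
    linarith
  linarith

/-- `g` attains a global minimum over `ℝ` at some `a ∈ (0.45, 0.46)` with minimum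
value `α = g(a) ∈ (3.14, 3.15)`. -/
theorem gFun_attains_global_min :
    ∃ a ∈ Set.Ioo (0.45 : ℝ) 0.46, ∃ α ∈ Set.Ioo (3.14 : ℝ) 3.15,
      gFun a = α ∧ ∀ x : ℝ, α ≤ gFun x := by
  -- minimize hFun on the compact interval [1.4335, 1.444]
  have hcont : ContinuousOn hFun (Set.Icc (1.4335:ℝ) 1.444) := by
    intro v hv
    exact (hasDerivAt_hFun v (le_trans (by norm_num) hv.1)).continuousAt.continuousWithinAt
  obtain ⟨u₀, hu₀mem, hu₀min⟩ := (isCompact_Icc : IsCompact (Set.Icc (1.4335:ℝ) 1.444)).exists_isMinOn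
    ⟨1.438, by norm_num⟩ hcont
  rw [isMinOn_iff] at hu₀min
  -- numeric comparisons at the test point 1.438
  have hm1438 : hFun u₀ ≤ hFun 1.438 := hu₀min 1.438 (by norm_num)
  have hcmp1 : hFun 1.438 < hFun 1.4335 := by unfold hFun; norm_num
  have hcmp2 : hFun 1.438 < hFun 1.444 := by unfold hFun; norm_num
  -- global minimality of hFun u₀ over [1, ∞)
  have key : ∀ u : ℝ, 1 ≤ u → hFun u₀ ≤ hFun u := by
    intro u hu
    rcases le_or_gt u 1.4335 with h | h
    · have h1 : hFun u₀ ≤ hFun 1.4335 := hu₀min 1.4335 (by norm_num)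
      rcases eq_or_lt_of_le h with rfl | h'
      · exact h1
      · exact le_trans h1 (hFun_anti ⟨hu, h⟩ (by norm_num) h').le
    · rcases le_or_gt 1.444 u with h2 | h2
      · have h1 : hFun u₀ ≤ hFun 1.444 := hu₀min 1.444 (by norm_num)
        rcases eq_or_lt_of_le h2 with rfl | h'
        · exact h1
        · exact le_trans h1 (hFun_mono (by norm_num) h2 h').le
      · exact hu₀min u ⟨h.le, h2.le⟩
  -- u₀ lies strictly inside (1.4335, 1.444)
  have hu₀lt : 1.4335 < u₀ := by
    rcases eq_or_lt_of_le hu₀mem.1 with h | h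
    · exfalso; rw [← h] at hm1438; linarith
    · exact h
  have hu₀lt' : u₀ < 1.444 := by
    rcases eq_or_lt_of_le hu₀mem.2 with h | h
    · exfalso; rw [h] at hm1438; linarith
    · exact h
  -- find a with cosh (2a) = u₀, a ∈ (0.45, 0.46)
  have hIVT := intermediate_value_Ioo (by norm_num : (0.9:ℝ) ≤ 0.92)
    (Real.continuous_cosh.continuousOn (s := Set.Icc 0.9 0.92))
  have hu₀Ioo : u₀ ∈ Set.Ioo (Real.cosh 0.9) (Real.cosh 0.92) :=
    ⟨lt_trans cosh9_lt hu₀lt, lt_trans hu₀lt' cosh92_gt⟩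
  obtain ⟨y, hy, hyc⟩ := hIVT hu₀Ioo
  refine ⟨y/2, ⟨by linarith [hy.1], by linarith [hy.2]⟩, hFun u₀, ⟨?_, ?_⟩, ?_, ?_⟩
  · -- 3.14 < hFun u₀
    have hd : (0:ℝ) < (u₀+1)*(2*u₀-1)^2 := by nlinarith
    show (3.14:ℝ) < 8*u₀^2*(u₀^2-u₀+1) / ((u₀+1)*(2*u₀-1)^2)
    rw [lt_div_iff₀ hd]
    nlinarith [sq_nonneg (u₀-1.4335), sq_nonneg (u₀-1.444),
      mul_nonneg (sub_nonneg.2 hu₀lt.le) (sub_nonneg.2 hu₀lt'.le), sq_nonneg (u₀-1.438)]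
  · -- hFun u₀ < 3.15
    have : hFun 1.438 < 3.15 := by unfold hFun; norm_num
    linarith
  · rw [gFun_eq, show 2*(y/2) = y by ring, hyc]
  · intro x
    rw [gFun_eq]
    exact key _ (Real.one_le_cosh _)
end
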